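/- Let F = (1-κ*)G + κ*H with κ* ∈ (0,1), and fix a measurable set A with F(A) > 0 and G(A^c) > 0. Let H' = ((1-κ*)G_A + κ*H)/((1-κ*)G(A) + κ*) and, for γ = κ* > 0, let H̃' = (F_A + γH)/(F(A) + γ). Then for every ε > 0, if F(A) < ε, then for all measurable S, |H'(S) - H̃'(S)| ≤ C·ε for a constant C depending only on κ* and γ (in particular C can be taken as (1 + γ + κ*)/(κ*γ)). -/
import Mathlib


open MeasureTheory ENNReal

set_option maxHeartbeats 1000000 in
lemma stmt_11_aux (γ gA gAS hAr hAS hs ε : ℝ)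
    (hκ0 : 0 < γ) (hκ1 : γ < 1) (hε : 0 < ε)
    (hgAS0 : 0 ≤ gAS) (hgle : gAS ≤ gA)
    (hhAS0 : 0 ≤ hAS) (hhle : hAS ≤ hAr)
    (hhs0 : 0 ≤ hs) (hhs1 : hs ≤ 1)
    (hκhA : γ * hAr < ε) :
    |((1-γ)*gAS + γ*hs) / ((1-γ)*gA + γ) -
      ((1-γ)*gAS + γ*hAS + γ*hs) / ((1-γ)*gA + γ*hAr + γ)| ≤ (1 + γ + γ) / (γ * γ) * ε := by
  have hκ' : (0:ℝ) ≤ 1 - γ := by linarith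
  have hgA0 : 0 ≤ gA := le_trans hgAS0 hgle
  have hhA0 : 0 ≤ hAr := le_trans hhAS0 hhle
  set x := (1-γ)*gAS + γ*hs with hx
  set c := (1-γ)*gA + γ with hcdef
  have hc : 0 < c := by nlinarith [mul_nonneg hκ' hgA0]
  have hc' : 0 < c + γ*hAr := by nlinarith [mul_nonneg hκ0.le hhA0]
  have hxle : x ≤ c := by
    rw [hx, hcdef]
    nlinarith [mul_le_mul_of_nonneg_left hgle hκ', mul_le_mul_of_nonneg_left hhs1 hκ0.le]
  have hx0 : 0 ≤ x := by
    have := mul_nonneg hκ' hgAS0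
    have := mul_nonneg hκ0.le hhs0
    rw [hx]; linarith
  have heq : (1-γ)*gAS + γ*hAS + γ*hs = x + γ*hAS := by rw [hx]; ring
  have heq2 : (1-γ)*gA + γ*hAr + γ = c + γ*hAr := by rw [hcdef]; ring
  rw [heq, heq2]
  have key : x/c - (x + γ*hAS)/(c + γ*hAr) = γ*(x*hAr - c*hAS)/(c*(c + γ*hAr)) := by
    field_simp
    ring
  have habs : |x*hAr - c*hAS| ≤ c*hAr := by
    rw [abs_le]
    constructor
    · nlinarith [mul_le_mul_of_nonneg_left hhle hc.le]
    · nlinarith [mul_le_mul_of_nonneg_right hxle hhA0]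
  have hmain : |x/c - (x + γ*hAS)/(c + γ*hAr)| ≤ hAr := by
    rw [key, abs_div, abs_of_pos (by positivity : (0:ℝ) < c*(c + γ*hAr)), abs_mul,
      abs_of_pos hκ0]
    rw [div_le_iff₀ (by positivity)]
    calc γ * |x*hAr - c*hAS| ≤ γ * (c*hAr) := mul_le_mul_of_nonneg_left habs hκ0.le
      _ ≤ hAr * (c * (c + γ*hAr)) := by
          have hcγ : γ ≤ c := by nlinarith [mul_nonneg hκ' hgA0]
          nlinarith [mul_nonneg (mul_nonneg hhA0 hc.le)
            (by nlinarith [mul_nonneg hκ0.le hhA0] : (0:ℝ) ≤ c + γ*hAr - γ)]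
  refine hmain.trans ?_
  rw [div_mul_eq_mul_div, le_div_iff₀ (by positivity)]
  nlinarith [mul_nonneg hhA0 hκ0.le, mul_pos hε hκ0]

theorem stmt_11 {X : Type*} [MeasurableSpace X]
    (F G H : Measure X) [IsProbabilityMeasure F] [IsProbabilityMeasure G]
    [IsProbabilityMeasure H]
    (κ : ℝ) (hκ0 : 0 < κ) (hκ1 : κ < 1)
    (hF : F = ENNReal.ofReal (1 - κ) • G + ENNReal.ofReal κ • H)
    (A : Set X) (hA : MeasurableSet A) (hFA : 0 < F A) (hGAc : 0 < G Aᶜ)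
    (γ : ℝ) (hγ : γ = κ)
    (H' H'tilde : Measure X)
    (hH' : H' = (ENNReal.ofReal (1 - κ) * G A + ENNReal.ofReal κ)⁻¹ •
        (ENNReal.ofReal (1 - κ) • G.restrict A + ENNReal.ofReal κ • H))
    (hH'tilde : H'tilde = (F A + ENNReal.ofReal γ)⁻¹ •
        (F.restrict A + ENNReal.ofReal γ • H)) :
    ∀ ε : ℝ, 0 < ε → F A < ENNReal.ofReal ε →
      ∀ S : Set X, MeasurableSet S →
        |(H' S).toReal - (H'tilde S).toReal| ≤ (1 + γ + κ) / (κ * γ) * ε := by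
  subst hγ
  intro ε hε hFAε S hS
  have hκ' : (0:ℝ) ≤ 1 - γ := by linarith
  have hFAr : (F A).toReal = (1-γ)*(G A).toReal + γ*(H A).toReal := by
    rw [hF]
    simp [Measure.add_apply, Measure.smul_apply, smul_eq_mul,
      ENNReal.toReal_add, ENNReal.toReal_mul, ENNReal.toReal_ofReal hκ',
      ENNReal.toReal_ofReal hκ0.le, ENNReal.mul_ne_top, measure_ne_top]
  have hFASr : (F (S ∩ A)).toReal = (1-γ)*(G (S ∩ A)).toReal + γ*(H (S ∩ A)).toReal := by
    rw [hF]
    simp [Measure.add_apply, Measure.smul_apply, smul_eq_mul,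
      ENNReal.toReal_add, ENNReal.toReal_mul, ENNReal.toReal_ofReal hκ',
      ENNReal.toReal_ofReal hκ0.le, ENNReal.mul_ne_top, measure_ne_top]
  have hH'S : (H' S).toReal =
      ((1-γ)*(G (S ∩ A)).toReal + γ*(H S).toReal) / ((1-γ)*(G A).toReal + γ) := by
    rw [hH']
    rw [Measure.smul_apply, smul_eq_mul, ENNReal.toReal_mul, ENNReal.toReal_inv]
    rw [Measure.add_apply, Measure.smul_apply, Measure.smul_apply, smul_eq_mul,
      smul_eq_mul, Measure.restrict_apply hS]
    rw [ENNReal.toReal_add (ENNReal.mul_ne_top ENNReal.ofReal_ne_top (measure_ne_top G _))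
      (ENNReal.mul_ne_top ENNReal.ofReal_ne_top (measure_ne_top H _))]
    rw [ENNReal.toReal_add (ENNReal.mul_ne_top ENNReal.ofReal_ne_top (measure_ne_top G _))
      ENNReal.ofReal_ne_top]
    simp [ENNReal.toReal_mul, ENNReal.toReal_ofReal hκ', ENNReal.toReal_ofReal hκ0.le,
      inv_mul_eq_div]
  have hH'tS : (H'tilde S).toReal =
      ((1-γ)*(G (S ∩ A)).toReal + γ*(H (S ∩ A)).toReal + γ*(H S).toReal) /
        ((1-γ)*(G A).toReal + γ*(H A).toReal + γ) := by
    rw [hH'tilde]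
    rw [Measure.smul_apply, smul_eq_mul, ENNReal.toReal_mul, ENNReal.toReal_inv]
    rw [Measure.add_apply, Measure.smul_apply, smul_eq_mul, Measure.restrict_apply hS]
    rw [ENNReal.toReal_add (measure_ne_top F _)
      (ENNReal.mul_ne_top ENNReal.ofReal_ne_top (measure_ne_top H _))]
    rw [ENNReal.toReal_add (measure_ne_top F _) ENNReal.ofReal_ne_top]
    simp only [ENNReal.toReal_mul, ENNReal.toReal_ofReal hκ0.le, inv_mul_eq_div,
      hFAr, hFASr]
  rw [hH'S, hH'tS]
  have hFAlt : (F A).toReal < ε := ENNReal.toReal_lt_of_lt_ofReal hFAε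
  have hκhA : γ * (H A).toReal < ε := by
    nlinarith [hFAr, hFAlt, mul_nonneg hκ' (ENNReal.toReal_nonneg (a := G A))]
  have hhs1 : (H S).toReal ≤ 1 := by
    have := prob_le_one (μ := H) (s := S)
    exact ENNReal.toReal_le_of_le_ofReal zero_le_one (by simpa using this)
  exact stmt_11_aux γ (G A).toReal (G (S ∩ A)).toReal (H A).toReal (H (S ∩ A)).toReal
    (H S).toReal ε hκ0 hκ1 hε ENNReal.toReal_nonneg
    (ENNReal.toReal_mono (measure_ne_top G A) (measure_mono Set.inter_subset_right))
    ENNReal.toReal_nonneg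
    (ENNReal.toReal_mono (measure_ne_top H A) (measure_mono Set.inter_subset_right))
    ENNReal.toReal_nonneg hhs1 hκhA
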